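/- Let A be a nontrivial commutative group containing an element of finite order m ≥ 2. Then the augmentation ideal of the integral group ring ℤ[A] is not nilpotent. (Key step: the ring ℤ[t]/⟨t^m − 1⟩ is reduced.) -/

import Mathlib

/-- The augmentation map of the integral group ring `ℤ[A]`. -/
noncomputable def aug (A : Type*) [AddCommGroup A] : AddMonoidAlgebra ℤ A →ₐ[ℤ] ℤ :=
  (AddMonoidAlgebra.lift ℤ ℤ A) 1

/-- The augmentation ideal of `ℤ[A]`. -/
noncomputable def augIdeal (A : Type*) [AddCommGroup A] : Ideal (AddMonoidAlgebra ℤ A) :=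
  RingHom.ker (aug A).toRingHom

/-- If `A` contains an element of finite order `m ≥ 2`, then the augmentation ideal of the
integral group ring `ℤ[A]` is not nilpotent. -/
theorem augIdeal_int_not_nilpotent (A : Type*) [AddCommGroup A] [Nontrivial A]
    (a : A) (m : ℕ) (hm : 2 ≤ m) (ha : addOrderOf a = m) :
    ∀ n : ℕ, 0 < n → augIdeal A ^ n ≠ ⊥ := by
  intro n hn hcontra
  haveI : NeZero m := ⟨by omega⟩
  haveI : Fact (1 < m) := ⟨by omega⟩
  -- primitive m-th root of unity
  set ζ : ℂ := Complex.exp (2 * Real.pi * Complex.I / m) with hζdef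
  have hζprim : IsPrimitiveRoot ζ m := Complex.isPrimitiveRoot_exp m (by omega)
  have hζm : ζ ^ m = 1 := hζprim.pow_eq_one
  have hζne : ζ ≠ 1 := hζprim.ne_one (by omega)
  -- the character ℤ[ZMod m] → ℂ
  let χadd : AddChar (ZMod m) ℂ := AddChar.zmodChar m hζm
  let χ : AddMonoidAlgebra ℤ (ZMod m) →ₐ[ℤ] ℂ :=
    (AddMonoidAlgebra.lift ℤ ℂ (ZMod m)) χadd.toMonoidHom
  -- the embedding ZMod m → A
  have hma : (zmultiplesHom A a) (m : ℤ) = 0 := by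
    simp [zmultiplesHom, ← ha, addOrderOf_nsmul_eq_zero]
  let ψ : ZMod m →+ A := ZMod.lift m ⟨zmultiplesHom A a, hma⟩
  have ψinj : Function.Injective ψ := by
    rw [injective_iff_map_eq_zero]
    intro k hk
    obtain ⟨j, rfl⟩ := ZMod.intCast_surjective k
    rw [ZMod.lift_coe] at hk
    simp only [zmultiplesHom_apply] at hk
    rw [ZMod.intCast_zmod_eq_zero_iff_dvd]
    have hdvd : (addOrderOf a : ℤ) ∣ j := addOrderOf_dvd_iff_zsmul_eq_zero.mpr hk
    rwa [ha] at hdvd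
  let Φ : AddMonoidAlgebra ℤ (ZMod m) →ₐ[ℤ] AddMonoidAlgebra ℤ A :=
    AddMonoidAlgebra.mapDomainAlgHom ℤ ℤ ψ
  have Φinj : Function.Injective Φ := by
    have : ⇑Φ = AddMonoidAlgebra.mapDomain ψ := rfl
    rw [this]
    exact AddMonoidAlgebra.mapDomain_injective ψinj
  -- the element y = [1] - 1 in ℤ[ZMod m]
  let y : AddMonoidAlgebra ℤ (ZMod m) := AddMonoidAlgebra.single (1 : ZMod m) 1 - 1
  have hχy : χ y = ζ - 1 := by
    have h1 : χ (AddMonoidAlgebra.single (1 : ZMod m) 1) = ζ := by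
      rw [show χ (AddMonoidAlgebra.single (1 : ZMod m) 1)
          = (1 : ℤ) • χadd.toMonoidHom (Multiplicative.ofAdd (1 : ZMod m)) from
        AddMonoidAlgebra.lift_single _ _ _]
      have : χadd (1 : ZMod m) = ζ ^ (1 : ZMod m).val := AddChar.zmodChar_apply hζm 1
      simp only [one_smul]
      rw [show χadd.toMonoidHom (Multiplicative.ofAdd (1 : ZMod m)) = χadd (1 : ZMod m) from rfl,
        this, ZMod.val_one m, pow_one]
    simp [y, map_sub, h1]
  have hyn : y ^ n ≠ 0 := by
    intro h
    have : χ (y ^ n) = 0 := by rw [h, map_zero]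
    rw [map_pow, hχy] at this
    exact pow_ne_zero n (sub_ne_zero.mpr hζne) this
  -- x = Φ y lies in the augmentation ideal
  set x : AddMonoidAlgebra ℤ A := Φ y with hxdef
  have hxmem : x ∈ augIdeal A := by
    have : aug A x = 0 := by
      have hΦs : Φ (AddMonoidAlgebra.single (1 : ZMod m) (1 : ℤ))
          = AddMonoidAlgebra.single (ψ 1) (1 : ℤ) := AddMonoidAlgebra.mapDomain_single
      have hΦy : x = AddMonoidAlgebra.single (ψ 1) (1 : ℤ) - 1 := by
        rw [hxdef, show y = AddMonoidAlgebra.single (1 : ZMod m) 1 - 1 from rfl,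
          map_sub, map_one, hΦs]
      have haugs : ∀ b : A, (aug A) (AddMonoidAlgebra.single b (1 : ℤ)) = 1 := by
        intro b
        simp [aug, AddMonoidAlgebra.lift_single]
      rw [hΦy, map_sub]
      simp [haugs]
    exact this
  have hxpow : x ^ n ∈ augIdeal A ^ n := Ideal.pow_mem_pow hxmem n
  rw [hcontra] at hxpow
  have : x ^ n = 0 := hxpow
  rw [hxdef, ← map_pow] at this
  exact hyn (Φinj (by rw [this, map_zero]))
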